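/- Let G be a finite group and S a finite subset of G \ {0}. Let Σ(S) denote the set of all sums of nonempty subsets of S (elements summed in some order). Then for every y ∈ S, |Σ(S)| ≥ |Σ(S \ {y})| + |(Σ(S) + y) \ Σ(S)|. -/

import Mathlib

open Pointwise

/-- The set of all sums over nonempty subsets of `S`, with elements summed in some order. -/
def sumset {G : Type*} [AddGroup G] (S : Finset G) : Set G :=
  {g | ∃ l : List G, l.Nodup ∧ l ≠ [] ∧ (∀ x ∈ l, x ∈ S) ∧ l.sum = g}

theorem stmt_3 {G : Type*} [AddGroup G] [Fintype G] [DecidableEq G]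
    (S : Finset G) (hS : (0 : G) ∉ S) (y : G) (hy : y ∈ S) :
    (sumset (S.erase y)).ncard + (((· + y) '' sumset S) \ sumset S).ncard ≤
      (sumset S).ncard := by
  set A := sumset (S.erase y) with hA
  set B := sumset S with hB
  have hAB : A ⊆ B := by
    rintro a ⟨l, hnd, hne, hmem, hsum⟩
    exact ⟨l, hnd, hne, fun x hx => Finset.mem_of_mem_erase (hmem x hx), hsum⟩
  have happ : ∀ b ∈ A, b + y ∈ B := by
    rintro b ⟨l, hnd, hne, hmem, hsum⟩
    refine ⟨l ++ [y], ?_, by simp, ?_, by simp [hsum]⟩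
    · simp only [List.nodup_append, List.nodup_cons, List.not_mem_nil, not_false_iff,
        List.nodup_nil, and_true, true_and, List.disjoint_singleton]
      refine ⟨hnd, ?_⟩
      intro a ha
      simp only [List.mem_singleton, forall_eq, ne_eq]
      intro hay
      exact (Finset.mem_erase.mp (hmem _ ha)).1 hay
    · intro x hx
      rcases List.mem_append.mp hx with h | h
      · exact Finset.mem_of_mem_erase (hmem x h)
      · simp only [List.mem_singleton] at h; subst h; exact hy
  have hBfin : B.Finite := Set.toFinite B
  have himg : (fun x => x + (-y)) '' (((· + y) '' B) \ B) ⊆ B \ A := by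
    rintro z ⟨w, ⟨⟨b, hb, rfl⟩, hw⟩, rfl⟩
    simp only [add_neg_cancel_right]
    exact ⟨hb, fun hbA => hw (happ b hbA)⟩
  have hinj : Set.InjOn (fun x => x + (-y)) (((· + y) '' B) \ B) :=
    (add_left_injective (-y)).injOn
  calc A.ncard + (((· + y) '' B) \ B).ncard
      = A.ncard + ((fun x => x + (-y)) '' (((· + y) '' B) \ B)).ncard := by
        rw [Set.ncard_image_of_injOn hinj]
    _ ≤ A.ncard + (B \ A).ncard :=
        Nat.add_le_add_left (Set.ncard_le_ncard himg hBfin.diff) _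
    _ = B.ncard := by
        rw [add_comm]
        exact Set.ncard_diff_add_ncard_of_subset hAB hBfin
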